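/- Let $G$ be a non-trivial ICC group. For every finite subset $A$ of $G$ there exists an $A$-switcher, i.e. an element $b \in G$ such that $A \cap AbA = \varnothing$ and such that for all $a_1', a_2', a_1'', a_2'' \in A$, the equality $a_1' b a_2' = a_1'' b a_2''$ implies $a_1' = a_1''$ and $a_2' = a_2''$. -/

import Mathlib

open scoped Pointwise

/-- `b` is an `A`-switcher: `A ∩ AbA = ∅`, and `a₁' b a₂' = a₁'' b a₂''` with all four
elements in `A` implies `a₁' = a₁''` and `a₂' = a₂''`. -/
def IsSwitcher {G : Type*} [Group G] (A : Set G) (b : G) : Prop :=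
  (∀ a₁ ∈ A, ∀ a₂ ∈ A, a₁ * b * a₂ ∉ A) ∧
  ∀ a₁' ∈ A, ∀ a₂' ∈ A, ∀ a₁'' ∈ A, ∀ a₂'' ∈ A,
    a₁' * b * a₂' = a₁'' * b * a₂'' → a₁' = a₁'' ∧ a₂' = a₂''

/-- If the conjugacy class of `h` is infinite, the centralizer of `h` has infinite index. -/
lemma centralizer_not_finiteIndex {G : Type*} [Group G] {h : G}
    (hinf : {x : G | IsConj h x}.Infinite) : ¬ (Subgroup.centralizer {h}).FiniteIndex := by
  intro hfi
  have horb : MulAction.orbit (ConjAct G) h = {x : G | IsConj h x} := by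
    ext x
    rw [ConjAct.mem_orbit_conjAct]
    exact isConj_comm
  have hidx : (Subgroup.centralizer {h}).index = 0 := by
    erw [Subgroup.centralizer_eq_comap_stabilizer,
      Subgroup.index_comap_of_surjective _ (MulEquiv.surjective _),
      MulAction.index_stabilizer]
    refine Set.Infinite.ncard ?_
    rw [horb]
    exact hinf
  exact hfi.index_ne_zero hidx

/-- In a non-trivial ICC group, every finite subset admits a switcher. -/
theorem exists_switcher {G : Type*} [Group G] [Nontrivial G]
    (hICC : ∀ g : G, g ≠ 1 → {x : G | IsConj g x}.Infinite)
    (A : Set G) (hA : A.Finite) :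
    ∃ b : G, IsSwitcher A b := by
  classical
  by_contra hcon
  push_neg at hcon
  -- `G` is infinite
  obtain ⟨g₀, hg₀⟩ := exists_ne (1 : G)
  have hGinf : Infinite G := by
    rw [← Set.infinite_univ_iff]
    exact ((hICC g₀ hg₀).mono (Set.subset_univ _))
  -- finite set of "bad points"
  set S : Set G := {b | ∃ a₁ ∈ A, ∃ a₂ ∈ A, a₁ * b * a₂ ∈ A} with hS_def
  have hS : S.Finite := by
    refine ((hA.inv.mul hA).mul hA.inv).subset ?_
    rintro b ⟨a₁, ha₁, a₂, ha₂, hm⟩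
    exact ⟨a₁⁻¹ * (a₁ * b * a₂), ⟨a₁⁻¹, Set.inv_mem_inv.mpr ha₁, a₁ * b * a₂, hm, rfl⟩,
      a₂⁻¹, Set.inv_mem_inv.mpr ha₂, by group⟩
  -- finite set of "bad pairs"
  set P : Set (G × G) := ((A⁻¹ * A) \ {1}) ×ˢ ((A * A⁻¹) \ {1}) with hP_def
  have hP : P.Finite := ((hA.inv.mul hA).diff).prod ((hA.mul hA.inv).diff)
  haveI := hS.to_subtype
  haveI := hP.to_subtype
  haveI : Fintype (↥S ⊕ ↥P) := Fintype.ofFinite _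
  -- the coset cover data
  let x : ↥S ⊕ ↥P → G := fun i => match i with
    | .inl s => s.1
    | .inr p => if hex : ∃ b : G, b⁻¹ * p.1.1 * b = p.1.2 then hex.choose else 1
  let K : ↥S ⊕ ↥P → Subgroup G := fun i => match i with
    | .inl _ => ⊥
    | .inr p => Subgroup.centralizer {p.1.2}
  have hcovers : ⋃ i ∈ (Finset.univ : Finset (↥S ⊕ ↥P)), x i • (K i : Set G) = Set.univ := by
    rw [Set.eq_univ_iff_forall]
    intro b
    refine Set.mem_iUnion₂.mpr ?_
    rcases not_and_or.mp (hcon b) with h1 | h2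
    · push_neg at h1
      obtain ⟨a₁, ha₁, a₂, ha₂, hmem⟩ := h1
      refine ⟨.inl ⟨b, ⟨a₁, ha₁, a₂, ha₂, hmem⟩⟩, Finset.mem_univ _, ?_⟩
      rw [mem_leftCoset_iff]
      show b⁻¹ * b ∈ (⊥ : Subgroup G)
      simp
    · push_neg at h2
      obtain ⟨a₁', ha₁', a₂', ha₂', a₁'', ha₁'', a₂'', ha₂'', heq, hne⟩ := h2
      have hne₁ : a₁' ≠ a₁'' := by
        intro h
        subst h
        have : a₂' = a₂'' := by
          have := heq
          exact mul_left_cancel this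
        exact hne rfl this
      set g : G := a₁''⁻¹ * a₁' with hg_def
      set h : G := a₂'' * a₂'⁻¹ with hh_def
      have hconj : b⁻¹ * g * b = h := by
        rw [hg_def, hh_def]
        have : a₁' * b = a₁'' * b * a₂'' * a₂'⁻¹ := by
          rw [← heq]; group
        rw [show a₁''⁻¹ * a₁' = a₁''⁻¹ * (a₁' * b) * b⁻¹ by group, this]
        group
      have hg1 : g ≠ 1 := by
        intro h0
        apply hne₁
        rw [hg_def] at h0
        have := inv_mul_eq_one.mp h0
        exact this.symm
      have hh1 : h ≠ 1 := by
        intro h0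
        apply hg1
        rw [h0] at hconj
        have : g * b = b := by
          calc g * b = b * (b⁻¹ * g * b) := by group
          _ = b * 1 := by rw [hconj]
          _ = b := mul_one b
        exact mul_right_cancel (by rw [this, one_mul])
      have hgP : g ∈ (A⁻¹ * A) \ ({1} : Set G) :=
        ⟨⟨a₁''⁻¹, Set.inv_mem_inv.mpr ha₁'', a₁', ha₁', rfl⟩, by simpa using hg1⟩
      have hhP : h ∈ (A * A⁻¹) \ ({1} : Set G) :=
        ⟨⟨a₂'', ha₂'', a₂'⁻¹, Set.inv_mem_inv.mpr ha₂', rfl⟩, by simpa using hh1⟩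
      have hpP : (g, h) ∈ P := Set.mem_prod.mpr ⟨hgP, hhP⟩
      refine ⟨.inr ⟨(g, h), hpP⟩, Finset.mem_univ _, ?_⟩
      have hex : ∃ c : G, c⁻¹ * g * c = h := ⟨b, hconj⟩
      rw [mem_leftCoset_iff]
      show (x (.inr ⟨(g, h), hpP⟩))⁻¹ * b ∈ Subgroup.centralizer {h}
      have hx : x (.inr ⟨(g, h), hpP⟩) = hex.choose := dif_pos hex
      rw [hx]
      set b₀ : G := hex.choose with hb₀_def
      have hch : b₀⁻¹ * g * b₀ = h := hex.choose_spec
      rw [Subgroup.mem_centralizer_iff]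
      intro m hm
      rw [Set.mem_singleton_iff] at hm
      subst hm
      have e1 : g = b₀ * h * b₀⁻¹ := by rw [← hch]; group
      have e2 : g = b * h * b⁻¹ := by rw [← hconj]; group
      calc h * (b₀⁻¹ * b) = b₀⁻¹ * (b₀ * h * b₀⁻¹) * b := by group
        _ = b₀⁻¹ * (b * h * b⁻¹) * b := by rw [← e1, ← e2]
        _ = b₀⁻¹ * b * h := by group
  obtain ⟨i, _, hfi⟩ := Subgroup.exists_finiteIndex_of_leftCoset_cover hcovers
  match i with
  | .inl s =>
    have : (⊥ : Subgroup G).index = 0 := by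
      rw [Subgroup.index_bot]
      exact Nat.card_eq_zero_of_infinite
    exact hfi.index_ne_zero this
  | .inr p =>
    have hh1 : p.1.2 ≠ 1 := by
      have := (Set.mem_prod.mp p.2).2
      simpa using this.2
    exact centralizer_not_finiteIndex (hICC p.1.2 hh1) hfi
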